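/- Let μ be a finite Borel measure on ℝⁿ with 0 < μ(B_r(x)) < ∞, let X = ⨍_{B_r(x)} y dμ(y) be the μ-center of mass of B_r(x), and consider the nonnegative bilinear form Q(v,w) = ⨍_{B_r(x)} (v·(y−X))(w·(y−X)) dμ(y) with orthonormal eigenbasis v₁,…,v_n and eigenvalues λ₁ ≥ … ≥ λ_n ≥ 0. Then for every z ∈ ℝⁿ, every a ∈ ℝ, every w ∈ ℝⁿ, and every i, one has λ_i (v_i·w)² ≤ ⨍_{B_r(x)} |a − (z−y)·w|² dμ(y). (Applied in the paper with a = u(z) and w = Du(z) for u differentiable at z.) -/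

import Mathlib

open MeasureTheory Metric Set
open scoped ENNReal NNReal RealInnerProductSpace

noncomputable section

/-- `ℝⁿ` as a Euclidean space. -/
abbrev Rn (n : ℕ) : Type := EuclideanSpace ℝ (Fin n)

/-- The Alt–Caffarelli energy `∫_D |Du|² + Q² 1_{u>0}`. -/
def acEnergy {n : ℕ} (Q u : Rn n → ℝ) (D : Set (Rn n)) : ℝ :=
  ∫ x in D, (‖fderiv ℝ u x‖ ^ 2 + Q x ^ 2 * Set.indicator {y | 0 < u y} (fun _ => (1 : ℝ)) x)

/-- `u` solves the one-phase Alt–Caffarelli problem `(⋆_{Ω,Q})`: `u ≥ 0` on `Ω` and `u`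
minimizes the Alt–Caffarelli energy on every compactly contained subdomain, among
competitors agreeing with `u` off the subdomain (i.e. `u - v ∈ W^{1,2}_0(D)`). -/
structure ACSolution {n : ℕ} (Ω : Set (Rn n)) (Q u : Rn n → ℝ) : Prop where
  nonneg : ∀ x ∈ Ω, 0 ≤ u x
  locallyMinimizing : ∀ D : Set (Rn n), IsCompact (closure D) → closure D ⊆ Ω →
    ∀ v : Rn n → ℝ, (∀ x ∈ Ω \ D, v x = u x) → acEnergy Q u D ≤ acEnergy Q v D

/-- The free boundary `∂{u > 0}`. -/
def freeBoundary {n : ℕ} (u : Rn n → ℝ) : Set (Rn n) := frontier {x | 0 < u x}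

/-- `u` is `1`-homogeneous about `x₀`. -/
def IsOneHomogeneousAbout {n : ℕ} (u : Rn n → ℝ) (x₀ : Rn n) : Prop :=
  ∀ r : ℝ, 0 < r → ∀ ξ : Rn n, u (x₀ + r • ξ) = r * u (x₀ + ξ)

/-- `u` is `k`-symmetric: `1`-homogeneous about some point and translation invariant
along some `k`-dimensional linear subspace. -/
def IsKSymmetric {n : ℕ} (k : ℕ) (u : Rn n → ℝ) : Prop :=
  (∃ x₀, IsOneHomogeneousAbout u x₀) ∧
  ∃ L : Submodule ℝ (Rn n), Module.finrank ℝ L = k ∧ ∀ (x : Rn n), ∀ v ∈ L, u (x + v) = u x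

/-- `u` is `(k,ε)`-symmetric in `B_s(x)`. -/
def IsSymmetricIn {n : ℕ} (k : ℕ) (ε : ℝ) (u : Rn n → ℝ) (x : Rn n) (s : ℝ) : Prop :=
  ∃ v : Rn n → ℝ, IsKSymmetric k v ∧
    s ^ (2 - (n : ℝ)) * (∫ y in ball x s, (u y - v y) ^ 2) < ε

/-- The quantitative `(k,ε,r)`-stratum `S^k_{ε,r}(u)`. -/
def quantStratum {n : ℕ} (Ω : Set (Rn n)) (u : Rn n → ℝ) (k : ℕ) (ε r : ℝ) : Set (Rn n) :=
  {x ∈ freeBoundary u ∩ Ω |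
    ∀ s : ℝ, r ≤ s → s ≤ min 1 (infDist x Ωᶜ) → ¬ IsSymmetricIn (k + 1) ε u x s}

/-- The `(k,ε)`-stratum `S^k_ε(u)`. -/
def epsStratum {n : ℕ} (Ω : Set (Rn n)) (u : Rn n → ℝ) (k : ℕ) (ε : ℝ) : Set (Rn n) :=
  {x ∈ freeBoundary u ∩ Ω |
    ∀ s : ℝ, 0 < s → s ≤ min 1 (infDist x Ωᶜ) → ¬ IsSymmetricIn (k + 1) ε u x s}

/-- Bound `[Q]_{α,A} ≤ M` on the `α`-Hölder seminorm of `Q` on `A`. -/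
def HolderSemiNormLE {n : ℕ} (α : ℝ) (Q : Rn n → ℝ) (A : Set (Rn n)) (M : ℝ) : Prop :=
  ∀ x ∈ A, ∀ y ∈ A, |Q x - Q y| ≤ M * dist x y ^ α

/-- `Q` is positive with `|Q + 1/Q|_{C⁰(A)} ≤ Λ`. -/
def QBounds {n : ℕ} (Q : Rn n → ℝ) (A : Set (Rn n)) (Λ : ℝ) : Prop :=
  ∀ x ∈ A, 0 < Q x ∧ Q x + (Q x)⁻¹ ≤ Λ

/-- The Weiss density `W_r(Q,u,y)`. -/
def weissDensity {n : ℕ} (Q u : Rn n → ℝ) (y : Rn n) (r : ℝ) : ℝ :=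
  r ^ (-(n : ℝ)) * (∫ x in ball y r, ‖fderiv ℝ u x‖ ^ 2) +
    Q y ^ 2 * r ^ (-(n : ℝ)) * (volume ({x | 0 < u x} ∩ ball y r)).toReal -
    r ^ (-(n : ℝ) - 1) * ∫ x in sphere y r, u x ^ 2 ∂μH[(n : ℝ) - 1]

/-- The trivial (half-plane / "linear") one-homogeneous solutions `x ↦ max (x·e) 0`. -/
def IsHalfPlaneSolution {m : ℕ} (u : Rn m → ℝ) : Prop :=
  ∃ e : Rn m, ∀ x, u x = max (⟪x, e⟫) 0

/-- `k*`: the smallest dimension admitting a non-linear one-homogeneous solution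
of `(⋆_{ℝ^{k*},1})`. -/
def kstar : ℕ :=
  sInf {m : ℕ | ∃ u : Rn m → ℝ, ACSolution Set.univ (fun _ => 1) u ∧
    IsOneHomogeneousAbout u 0 ∧ ¬ IsHalfPlaneSolution u}

/-- `x` is a regular point of the free boundary: near `x`, `∂{u>0}` is a `C^{1,β}`
graph over a hyperplane, for some `β > 0`. -/
def IsRegularPoint {n : ℕ} (u : Rn n → ℝ) (x : Rn n) : Prop :=
  ∃ r : ℝ, 0 < r ∧ ∃ β : ℝ, 0 < β ∧
    ∃ (e : Rn n ≃L[ℝ] (EuclideanSpace ℝ (Fin (n - 1)) × ℝ))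
      (f : EuclideanSpace ℝ (Fin (n - 1)) → ℝ) (C : ℝ),
      ContDiff ℝ 1 f ∧
      (∀ a b, ‖fderiv ℝ f a - fderiv ℝ f b‖ ≤ C * dist a b ^ β) ∧
      freeBoundary u ∩ ball x r = (e ⁻¹' {p | p.2 = f p.1}) ∩ ball x r

/-- The singular set: non-regular points of the free boundary in `Ω`. -/
def singularSet {n : ℕ} (Ω : Set (Rn n)) (u : Rn n → ℝ) : Set (Rn n) :=
  (freeBoundary u ∩ Ω) \ {x | IsRegularPoint u x}

/-- `S` is `k`-rectifiable: `ℋ^k`-almost all of `S` is covered by countably many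
`C¹` images of `ℝ^k`. -/
def KRectifiable {n : ℕ} (k : ℕ) (S : Set (Rn n)) : Prop :=
  ∃ f : ℕ → (EuclideanSpace ℝ (Fin k) → Rn n),
    (∀ i, ContDiff ℝ 1 (f i)) ∧ μH[(k : ℝ)] (S \ ⋃ i, Set.range (f i)) = 0

/-- The squared Jones `β`-number `β^k_{μ,2}(x,r)²`. -/
def jonesBetaSq {n : ℕ} (k : ℕ) (μ : Measure (Rn n)) (x : Rn n) (r : ℝ) : ℝ :=
  sInf {b : ℝ | ∃ V : AffineSubspace ℝ (Rn n), (V : Set (Rn n)).Nonempty ∧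
    Module.finrank ℝ V.direction = k ∧
    b = r ^ (-(k : ℝ) - 2) * ∫ z in ball x r, (infDist z (V : Set (Rn n))) ^ 2 ∂μ}

lemma integral_cs {α : Type*} [MeasurableSpace α] (μ : Measure α) (f g : α → ℝ)
    (hf : Integrable (fun y => f y ^ 2) μ) (hg : Integrable (fun y => g y ^ 2) μ)
    (hfg : Integrable (fun y => f y * g y) μ) :
    (∫ y, f y * g y ∂μ) ^ 2 ≤ (∫ y, f y ^ 2 ∂μ) * (∫ y, g y ^ 2 ∂μ) := by
  have key : ∀ t : ℝ, 0 ≤ (∫ y, f y ^ 2 ∂μ) * t ^ 2 + (2 * ∫ y, f y * g y ∂μ) * t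
      + ∫ y, g y ^ 2 ∂μ := by
    intro t
    have h1 : Integrable (fun y => (f y ^ 2) * t ^ 2 + (2 * (f y * g y)) * t) μ :=
      ((hf.mul_const _).add ((hfg.const_mul 2).mul_const t))
    have : (0:ℝ) ≤ ∫ y, (t * f y + g y) ^ 2 ∂μ :=
      integral_nonneg fun y => sq_nonneg _
    calc (0:ℝ) ≤ ∫ y, (t * f y + g y) ^ 2 ∂μ := this
      _ = ∫ y, ((f y ^ 2) * t ^ 2 + (2 * (f y * g y)) * t + g y ^ 2) ∂μ := by
          congr 1; funext y; ring
      _ = (∫ y, (f y ^ 2) * t ^ 2 + (2 * (f y * g y)) * t ∂μ) + ∫ y, g y ^ 2 ∂μ :=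
          integral_add h1 hg
      _ = ((∫ y, f y ^ 2 * t ^ 2 ∂μ) + ∫ y, 2 * (f y * g y) * t ∂μ) + ∫ y, g y ^ 2 ∂μ := by
          rw [integral_add (hf.mul_const _) ((hfg.const_mul 2).mul_const t)]
      _ = (∫ y, f y ^ 2 ∂μ) * t ^ 2 + (2 * ∫ y, f y * g y ∂μ) * t + ∫ y, g y ^ 2 ∂μ := by
          rw [integral_mul_const, integral_mul_const, integral_const_mul]
  set A := ∫ y, f y ^ 2 ∂μ
  set B := ∫ y, g y ^ 2 ∂μ
  set C := ∫ y, f y * g y ∂μ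
  have hd := discrim_le_zero (a := A) (b := 2 * C) (c := B)
    (fun t => by nlinarith [key t])
  rw [discrim] at hd
  nlinarith [hd]


/-- eigenvalue estimate in the proof of Theorem 5.1: for the second
moment form of `μ` on `B_r(x)` centered at the `μ`-center of mass, each eigenvalue is
controlled by the mean square of `a - (z-y)·w`. -/
theorem eigenvalue_moment_estimate
    (n : ℕ) (μ : Measure (Rn n)) [IsFiniteMeasure μ] (x : Rn n) (r : ℝ)
    (hpos : 0 < μ (ball x r)) (X : Rn n)
    (hX : X = (μ (ball x r)).toReal⁻¹ • ∫ y in ball x r, y ∂μ)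
    (v : Fin n → Rn n) (hv : Orthonormal ℝ v) (lam : Fin n → ℝ)
    (hmono : ∀ i j : Fin n, i ≤ j → lam j ≤ lam i) (hnn : ∀ i, 0 ≤ lam i)
    (heig : ∀ (i : Fin n) (w : Rn n),
      (μ (ball x r)).toReal⁻¹ * ∫ y in ball x r, ⟪v i, y - X⟫ * ⟪w, y - X⟫ ∂μ
        = lam i * ⟪v i, w⟫) :
    ∀ (z : Rn n) (a : ℝ) (w : Rn n) (i : Fin n),
      lam i * ⟪v i, w⟫ ^ 2 ≤
        (μ (ball x r)).toReal⁻¹ * ∫ y in ball x r, (a - ⟪z - y, w⟫) ^ 2 ∂μ := by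
  intro z a w i
  set B := ball x r with hB
  set m := (μ B).toReal with hm
  have hmpos : 0 < m := ENNReal.toReal_pos hpos.ne' (measure_ne_top μ _)
  have hint : ∀ f : Rn n → ℝ, Continuous f → IntegrableOn f B μ := by
    intro f hf
    exact ((hf.continuousOn).integrableOn_compact (isCompact_closedBall x r)).mono_set
      ball_subset_closedBall
  set f : Rn n → ℝ := fun y => ⟪v i, y - X⟫ with hfd
  set g : Rn n → ℝ := fun y => ⟪w, y - X⟫ with hgd
  have hcf : Continuous f := by
    rw [hfd]; exact continuous_const.inner (continuous_id.sub continuous_const)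
  have hcg : Continuous g := by
    rw [hgd]; exact continuous_const.inner (continuous_id.sub continuous_const)
  have hidint : IntegrableOn (fun y : Rn n => y) B μ :=
    (continuous_id.continuousOn.integrableOn_compact (isCompact_closedBall x r)).mono_set
      ball_subset_closedBall
  have hgint : IntegrableOn g B μ := hint _ hcg
  have hg2int : IntegrableOn (fun y => g y ^ 2) B μ := hint _ (hcg.pow 2)
  have hf2int : IntegrableOn (fun y => f y ^ 2) B μ := hint _ (hcf.pow 2)
  have hfgint : IntegrableOn (fun y => f y * g y) B μ := hint _ (hcf.mul hcg)
  -- center of mass: ∫ g = 0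
  have hzero : ∫ y in B, g y ∂μ = 0 := by
    have h1 : ∫ y in B, g y ∂μ = (∫ y in B, ⟪w, y⟫ ∂μ) - m * ⟪w, X⟫ := by
      have he : ∀ y : Rn n, g y = ⟪w, y⟫ - ⟪w, X⟫ := fun y => by
        simp [hgd, inner_sub_right]
      rw [show (fun y => g y) = fun y : Rn n => ⟪w, y⟫ - ⟪w, X⟫ from funext he]
      rw [integral_sub (hint _ (continuous_const.inner continuous_id'))
        (integrableOn_const (by
          simpa using (measure_ball_lt_top (x := x) (r := r)).ne))]
      simp [mul_comm, Measure.real, hm]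
    have h2 : ∫ y in B, ⟪w, y⟫ ∂μ = ⟪w, ∫ y in B, y ∂μ⟫ :=
      integral_inner hidint w
    have h3 : ⟪w, X⟫ = m⁻¹ * ⟪w, ∫ y in B, y ∂μ⟫ := by
      rw [hX, inner_smul_right]
    rw [h1, h2, h3]
    field_simp
    simp
  -- expansion of the right-hand integrand
  set c : ℝ := a - ⟪z - X, w⟫ with hc
  have hpt : ∀ y : Rn n, (a - ⟪z - y, w⟫) ^ 2 = c ^ 2 + 2 * c * g y + g y ^ 2 := by
    intro y
    have h4 : ⟪z - y, w⟫ = ⟪z - X, w⟫ - ⟪y - X, w⟫ := by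
      rw [← inner_sub_left]; congr 1; abel
    have h5 : g y = ⟪y - X, w⟫ := real_inner_comm _ _
    rw [h5] at *
    rw [h4, hc]; ring
  have hconst : IntegrableOn (fun _ : Rn n => c ^ 2) B μ :=
    hint _ continuous_const
  have hsum1 : IntegrableOn (fun y => c ^ 2 + 2 * c * g y) B μ :=
    hconst.add (hgint.const_mul _)
  have hrhs : ∫ y in B, (a - ⟪z - y, w⟫) ^ 2 ∂μ
      = c ^ 2 * m + ∫ y in B, g y ^ 2 ∂μ := by
    rw [show (fun y : Rn n => (a - ⟪z - y, w⟫) ^ 2)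
        = fun y => c ^ 2 + 2 * c * g y + g y ^ 2 from funext hpt]
    rw [integral_add hsum1 hg2int, integral_add hconst (hgint.const_mul _),
      integral_const, integral_const_mul, hzero]
    simp [mul_comm, hm, Measure.real]
  -- the three quantities
  have h1 : m⁻¹ * ∫ y in B, f y * g y ∂μ = lam i * ⟪v i, w⟫ := heig i w
  have h2 : m⁻¹ * ∫ y in B, f y ^ 2 ∂μ = lam i := by
    have hh := heig i (v i)
    have hvv : (⟪v i, v i⟫ : ℝ) = 1 := by
      have h6 := hv.1 i
      rw [real_inner_self_eq_norm_sq, h6]; norm_num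
    rw [hvv, mul_one] at hh
    rw [← hh]
    congr 1
    exact integral_congr_ae (Filter.Eventually.of_forall fun y => by simp [hfd, sq])
  have hcs := integral_cs (μ.restrict B) f g hf2int hg2int hfgint
  have hg2nn : (0:ℝ) ≤ ∫ y in B, g y ^ 2 ∂μ := integral_nonneg fun y => sq_nonneg _
  -- main estimate
  have hkey : lam i * ⟪v i, w⟫ ^ 2 ≤ m⁻¹ * ∫ y in B, g y ^ 2 ∂μ := by
    rcases eq_or_lt_of_le (hnn i) with h0 | h0
    · rw [← h0, zero_mul]
      positivity
    · have e1 : (lam i * ⟪v i, w⟫) ^ 2 ≤ lam i * (m⁻¹ * ∫ y in B, g y ^ 2 ∂μ) := by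
        calc (lam i * ⟪v i, w⟫) ^ 2
            = m⁻¹ ^ 2 * (∫ y in B, f y * g y ∂μ) ^ 2 := by rw [← h1]; ring
          _ ≤ m⁻¹ ^ 2 * ((∫ y in B, f y ^ 2 ∂μ) * ∫ y in B, g y ^ 2 ∂μ) := by
              exact mul_le_mul_of_nonneg_left hcs (sq_nonneg _)
          _ = lam i * (m⁻¹ * ∫ y in B, g y ^ 2 ∂μ) := by rw [← h2]; ring
      have e2 : lam i * (lam i * ⟪v i, w⟫ ^ 2)
          ≤ lam i * (m⁻¹ * ∫ y in B, g y ^ 2 ∂μ) := by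
        calc lam i * (lam i * ⟪v i, w⟫ ^ 2) = (lam i * ⟪v i, w⟫) ^ 2 := by ring
          _ ≤ _ := e1
      exact le_of_mul_le_mul_left e2 h0
  calc lam i * ⟪v i, w⟫ ^ 2 ≤ m⁻¹ * ∫ y in B, g y ^ 2 ∂μ := hkey
    _ ≤ m⁻¹ * (c ^ 2 * m + ∫ y in B, g y ^ 2 ∂μ) := by
        apply mul_le_mul_of_nonneg_left _ (by positivity)
        nlinarith [sq_nonneg c, hmpos]
    _ = m⁻¹ * ∫ y in B, (a - ⟪z - y, w⟫) ^ 2 ∂μ := by rw [hrhs]
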